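/- Let N ≥ 2, let c_1,…,c_N be positive real numbers, let ν_1,…,ν_N be positive integers, and let σ > 0 be real. Then the function y = (y_1,…,y_{N−1}) ↦ (∑_{i=1}^{N−1} c_i e^{−ν_i y_i} + c_N e^{ν_N (y_1+⋯+y_{N−1})})^{−σ} is (Lebesgue) integrable on ℝ^{N−1}. -/

import Mathlib

open Finset Real MeasureTheory

lemma integrable_exp_neg_mul_abs' {b : ℝ} (hb : 0 < b) :
    Integrable (fun x : ℝ => Real.exp (-b * |x|)) := by
  have hIoi : IntegrableOn (fun x : ℝ => Real.exp (-b * |x|)) (Set.Ioi 0) := by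
    refine (exp_neg_integrableOn_Ioi 0 hb).congr_fun (fun x hx => ?_) measurableSet_Ioi
    rw [abs_of_pos hx, neg_mul]
    simp only [neg_mul]
  rw [← integrableOn_univ, ← Set.Iic_union_Ioi (a := (0:ℝ)), integrableOn_union]
  refine ⟨?_, hIoi⟩
  rw [show (volume : Measure ℝ) = Measure.map Neg.neg volume from
    (Measure.map_neg_eq_self (volume : Measure ℝ)).symm]
  have m : MeasurableEmbedding fun x : ℝ => -x := (Homeomorph.neg ℝ).measurableEmbedding
  rw [m.integrableOn_map_iff]
  simp_rw [Function.comp_def, abs_neg, Set.neg_preimage, Set.neg_Iic, neg_zero]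
  exact Iff.mpr integrableOn_Ici_iff_integrableOn_Ioi hIoi

lemma key_lb (n : ℕ) (hn : 0 < n) (a : Fin n → ℝ) (b : ℝ) (w : Fin n → ℕ)
    (hw : ∀ i, 0 < w i) (μ : ℕ) (hμ : 0 < μ) (m : ℝ) (hm : 0 < m)
    (hma : ∀ i, m ≤ a i) (hmb : m ≤ b) (y : Fin n → ℝ) :
    m * Real.exp ((∑ i, |y i|) / (4 * n)) ≤
      (∑ i, a i * Real.exp (-(w i : ℝ) * y i)) + b * Real.exp ((μ : ℝ) * ∑ i, y i) := by
  set T := ∑ i, |y i| with hTdef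
  have hT0 : 0 ≤ T := Finset.sum_nonneg fun i _ => abs_nonneg _
  have hn' : (0:ℝ) < n := by exact_mod_cast hn
  have hn1 : (1:ℝ) ≤ n := by exact_mod_cast hn
  have hsum_nonneg : 0 ≤ ∑ i, a i * Real.exp (-(w i : ℝ) * y i) :=
    Finset.sum_nonneg fun i _ => mul_nonneg ((hm.trans_le (hma i)).le) (exp_pos _).le
  have hb_pos : 0 < b := hm.trans_le hmb
  by_cases hcase : ∃ i, y i ≤ -(T / (4 * n))
  · obtain ⟨i, hi⟩ := hcase
    have hwi : (1:ℝ) ≤ (w i : ℝ) := by exact_mod_cast hw i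
    have h1 : m * Real.exp (T / (4*n)) ≤ a i * Real.exp (-(w i : ℝ) * y i) := by
      refine mul_le_mul (hma i) (Real.exp_le_exp.mpr ?_) (exp_pos _).le
        ((hm.trans_le (hma i)).le)
      have hyi : T/(4*n) ≤ -y i := by linarith
      calc T/(4*n) ≤ (w i : ℝ) * (T/(4*n)) :=
            le_mul_of_one_le_left (by positivity) hwi
        _ ≤ (w i : ℝ) * (-y i) := mul_le_mul_of_nonneg_left hyi (by positivity)
        _ = -(w i : ℝ) * y i := by ring
    have h2 : a i * Real.exp (-(w i : ℝ) * y i) ≤ ∑ j, a j * Real.exp (-(w j : ℝ) * y j) :=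
      Finset.single_le_sum (f := fun j => a j * Real.exp (-(w j : ℝ) * y j))
        (fun j _ => mul_nonneg ((hm.trans_le (hma j)).le) (exp_pos _).le)
        (Finset.mem_univ i)
    have h3 : 0 < b * Real.exp ((μ : ℝ) * ∑ i, y i) := mul_pos hb_pos (exp_pos _)
    linarith
  · push_neg at hcase
    have hs : T / 2 ≤ ∑ i, y i := by
      have hterm : ∀ i ∈ Finset.univ, |y i| - y i ≤ T / (2 * n) := by
        intro i _
        rcases le_or_gt 0 (y i) with h | h
        · rw [abs_of_nonneg h]
          have : (0:ℝ) ≤ T/(2*n) := by positivity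
          linarith
        · rw [abs_of_neg h]
          have h1 := hcase i
          have h2 : T/(2*n) = 2 * (T/(4*n)) := by field_simp; ring
          linarith
      have h4 := Finset.sum_le_sum hterm
      rw [Finset.sum_sub_distrib, Finset.sum_const, Finset.card_univ, Fintype.card_fin,
        nsmul_eq_mul] at h4
      have h5 : (n:ℝ) * (T/(2*n)) = T/2 := by field_simp
      rw [h5] at h4
      linarith
    have hμ1 : (1:ℝ) ≤ (μ : ℝ) := by exact_mod_cast hμ
    have hs0 : 0 ≤ ∑ i, y i := le_trans (by positivity) hs
    have key2 : m * Real.exp (T/(4*n)) ≤ b * Real.exp ((μ:ℝ) * ∑ i, y i) := by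
      refine mul_le_mul hmb (Real.exp_le_exp.mpr ?_) (exp_pos _).le hb_pos.le
      have h4 : T/(4*n) ≤ T/2 := by
        rw [div_le_div_iff₀ (by positivity) (by norm_num)]
        nlinarith
      have h5 : (∑ i, y i) ≤ (μ:ℝ) * ∑ i, y i := le_mul_of_one_le_left hs0 hμ1
      linarith
    linarith

theorem integrable_inv_power_sum_exp (N : ℕ) (hN : 2 ≤ N) (c : Fin N → ℝ)
    (hc : ∀ i, 0 < c i) (ν : Fin N → ℕ) (hν : ∀ i, 0 < ν i)
    (σ : ℝ) (hσ : 0 < σ) :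
    Integrable (fun y : Fin (N - 1) → ℝ =>
      ((∑ i : Fin (N - 1), c (Fin.castLE (Nat.sub_le N 1) i) *
          Real.exp (-(ν (Fin.castLE (Nat.sub_le N 1) i) : ℝ) * y i)) +
        c ⟨N - 1, by omega⟩ *
          Real.exp ((ν (⟨N - 1, by omega⟩ : Fin N) : ℝ) * ∑ i, y i)) ^ (-σ))
      volume := by
  have hn : 0 < N - 1 := by omega
  have hn' : (0:ℝ) < (N - 1 : ℕ) := by exact_mod_cast hn
  set g : (Fin (N-1) → ℝ) → ℝ := fun y =>
    (∑ i : Fin (N - 1), c (Fin.castLE (Nat.sub_le N 1) i) *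
          Real.exp (-(ν (Fin.castLE (Nat.sub_le N 1) i) : ℝ) * y i)) +
        c ⟨N - 1, by omega⟩ *
          Real.exp ((ν (⟨N - 1, by omega⟩ : Fin N) : ℝ) * ∑ i, y i) with hgdef
  -- minimal coefficient
  have hNe : (Finset.univ : Finset (Fin N)).Nonempty := ⟨⟨0, by omega⟩, Finset.mem_univ _⟩
  set m : ℝ := Finset.univ.inf' hNe c with hmdef
  have hm : 0 < m := (Finset.lt_inf'_iff hNe).mpr fun i _ => hc i
  have hma : ∀ i : Fin N, m ≤ c i := fun i => Finset.inf'_le c (Finset.mem_univ i)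
  have hg_lb : ∀ y : Fin (N-1) → ℝ,
      m * Real.exp ((∑ i, |y i|) / (4 * (N-1 : ℕ))) ≤ g y := fun y =>
    key_lb (N-1) hn (fun i => c (Fin.castLE (Nat.sub_le N 1) i)) (c ⟨N - 1, by omega⟩)
      (fun i => ν (Fin.castLE (Nat.sub_le N 1) i)) (fun i => hν _)
      (ν (⟨N - 1, by omega⟩ : Fin N)) (hν _) m hm (fun i => hma _) (hma _) y
  have hg_pos : ∀ y, 0 < g y := fun y =>
    lt_of_lt_of_le (mul_pos hm (exp_pos _)) (hg_lb y)
  -- continuity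
  have hg_cont : Continuous g := by
    rw [hgdef]; fun_prop
  have hcont : Continuous fun y => g y ^ (-σ) :=
    hg_cont.rpow_const fun y => Or.inl (hg_pos y).ne'
  -- the bound
  set β : ℝ := σ / (4 * (N-1 : ℕ)) with hβdef
  have hβ : 0 < β := by positivity
  have hbound_int : Integrable
      (fun y : Fin (N-1) → ℝ => m ^ (-σ) * ∏ i, Real.exp (-β * |y i|)) :=
    (Integrable.fintype_prod (f := fun _ : Fin (N-1) => fun t : ℝ => Real.exp (-β * |t|))
      (fun _ => integrable_exp_neg_mul_abs' hβ)).const_mul _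
  refine hbound_int.mono' hcont.aestronglyMeasurable (ae_of_all _ fun y => ?_)
  have hkey := hg_lb y
  have h1 : g y ^ (-σ) ≤ (m * Real.exp ((∑ i, |y i|) / (4 * (N-1 : ℕ)))) ^ (-σ) :=
    Real.rpow_le_rpow_of_nonpos (mul_pos hm (exp_pos _)) hkey (neg_nonpos.mpr hσ.le)
  rw [Real.norm_of_nonneg (Real.rpow_nonneg (hg_pos y).le _)]
  refine h1.trans (le_of_eq ?_)
  rw [Real.mul_rpow hm.le (exp_pos _).le, ← Real.exp_mul, ← Real.exp_sum]
  congr 2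
  rw [Finset.sum_div, Finset.sum_mul]
  refine Finset.sum_congr rfl fun i _ => ?_
  rw [hβdef]
  field_simp
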